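/- Define c(k) = -(k + k(1 - m - n)(m + n) + (m+n)^2)/(k + m + n) + m(k - m - n - m^2(1 + k + m + n) + m(1 + 3(m+n))) for rational k ≠ -(m+n), and define c' (k) = k1*(n^2 - 1)/(k1 + n) + 1 where k1 = k + m - 1 and k0 = k + (m-1)(m+n)/m. Then for integers m ≥ 1, n ≥ 2, the rational solutions k of c(k) = c'(k) with k ≠ -(m+n), k1 ≠ -n and k0 ≠ 0 are exactly k = -(m+n) + (m+n)/(m+1), k = -(m+n) + (1+m+n)/m, and (if m > 1) k = (-1 + 2m - m^2 + 2n - mn)/(m-1). -/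

import Mathlib

/-- equality of the central charge of the hook W-algebra with the
Sugawara central charge of its affine part characterizes the conformal levels
`k⁽¹⁾, k⁽²⁾` and (for `m > 1`) `k⁽³⁾`. -/
theorem stmt3 (m n : ℕ) (hm : 1 ≤ m) (hn : 2 ≤ n) (k : ℚ)
    (h1 : k ≠ -((m : ℚ) + n))
    (h2 : k + (m : ℚ) - 1 ≠ -(n : ℚ))
    (h3 : k + ((m : ℚ) - 1) * ((m : ℚ) + n) / m ≠ 0) :
    (-(k + k * (1 - (m : ℚ) - n) * ((m : ℚ) + n) + ((m : ℚ) + n) ^ 2) / (k + m + n)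
        + (m : ℚ) * (k - m - n - (m : ℚ) ^ 2 * (1 + k + m + n)
            + (m : ℚ) * (1 + 3 * ((m : ℚ) + n)))
      = (k + (m : ℚ) - 1) * ((n : ℚ) ^ 2 - 1) / ((k + (m : ℚ) - 1) + n) + 1)
    ↔ (k = -((m : ℚ) + n) + ((m : ℚ) + n) / (m + 1)
        ∨ k = -((m : ℚ) + n) + (1 + (m : ℚ) + n) / m
        ∨ (1 < m ∧ k = (-1 + 2 * (m : ℚ) - (m : ℚ) ^ 2 + 2 * n - (m : ℚ) * n) / ((m : ℚ) - 1))) := by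
  have hM : (1:ℚ) ≤ (m:ℚ) := by exact_mod_cast hm
  have hN : (2:ℚ) ≤ (n:ℚ) := by exact_mod_cast hn
  set M := (m:ℚ) with hMdef
  set N := (n:ℚ) with hNdef
  have hM0 : M ≠ 0 := by linarith
  have hM1 : M + 1 ≠ 0 := by linarith
  have hD1 : k + M + N ≠ 0 := fun h => h1 (by linarith)
  have hD2 : k + M - 1 + N ≠ 0 := fun h => h2 (by linarith)
  set f1 := (M+1)*(k+M+N) - (M+N) with hf1
  set f2 := M*(k+M+N) - (1+M+N) with hf2
  set f3 := (M-1)*k - (-1+2*M-M^2+2*N-M*N) with hf3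
  have key : (-(k + k * (1 - M - N) * (M + N) + (M + N) ^ 2) / (k + M + N)
        + M * (k - M - N - M ^ 2 * (1 + k + M + N) + M * (1 + 3 * (M + N)))
      = (k + M - 1) * (N ^ 2 - 1) / ((k + M - 1) + N) + 1)
      ↔ f1 * f2 * f3 = 0 := by
    rw [← sub_eq_zero]
    have expand : (-(k + k * (1 - M - N) * (M + N) + (M + N) ^ 2) / (k + M + N)
        + M * (k - M - N - M ^ 2 * (1 + k + M + N) + M * (1 + 3 * (M + N)))
        - ((k + M - 1) * (N ^ 2 - 1) / ((k + M - 1) + N) + 1))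
        = -(f1 * f2 * f3) / ((k + M + N) * (k + M - 1 + N)) := by
      rw [hf1, hf2, hf3]
      field_simp
      ring
    rw [expand, div_eq_zero_iff, neg_eq_zero]
    simp [mul_ne_zero hD1 hD2]
  rw [key, mul_eq_zero, mul_eq_zero]
  constructor
  · rintro ((h | h) | h)
    · left
      rw [hf1] at h
      field_simp
      linarith
    · right; left
      rw [hf2] at h
      field_simp
      linarith
    · rcases eq_or_lt_of_le hm with h1' | h1'
      · exfalso
        have hMe : M = 1 := by rw [hMdef, ← h1']; norm_num
        rw [hf3, hMe] at h
        have : N = 0 := by linarith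
        linarith
      · right; right
        refine ⟨h1', ?_⟩
        have hMm1 : M - 1 ≠ 0 := by
          have : (1:ℚ) < M := by rw [hMdef]; exact_mod_cast h1'
          linarith
        rw [hf3] at h
        field_simp
        linarith
  · rintro (h | h | ⟨hm2, h⟩)
    · left; left
      rw [hf1, h]
      field_simp
      ring
    · left; right
      rw [hf2, h]
      field_simp
      ring
    · right
      have hMm1 : M - 1 ≠ 0 := by
        have : (1:ℚ) < M := by rw [hMdef]; exact_mod_cast hm2
        linarith
      rw [hf3, h]
      field_simp
      ring
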